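/- Let G be a 2-terminal directed acyclic graph (TDAG) and let G' be obtained from G by deleting an edge (a,b) where a has outdegree at least 2 and b has indegree at least 2. Then G' is again a 2-terminal graph: every remaining edge lies on a simple directed s-t path in G'. -/

import Mathlib

variable {V : Type*}

/-- `p` is a simple directed path in the edge relation `E`. -/
def IsDiPath (E : V → V → Prop) (p : List V) : Prop := p.Chain' E ∧ p.Nodup

/-- `p` is a simple directed path from `x` to `y`. -/
def PathFrom (E : V → V → Prop) (p : List V) (x y : V) : Prop :=
  IsDiPath E p ∧ p.head? = some x ∧ p.getLast? = some y

/-- the edge `(a,b)` is traversed by the path `p`. -/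
def EdgeOn (a b : V) (p : List V) : Prop := (a, b) ∈ p.zip p.tail

/-- directed reachability. -/
def Reach (E : V → V → Prop) : V → V → Prop := Relation.ReflTransGen E

/-- no directed cycles. -/
def Acyclic (E : V → V → Prop) : Prop := ∀ a b, E a b → ¬ Reach E b a

/-- 2-terminal graph (edge version): no self-loops, some `s`-`t` path exists and
every edge lies on a simple `s`-`t` path. -/
def TwoTerminalE (E : V → V → Prop) (s t : V) : Prop :=
  (∀ v, ¬ E v v) ∧ (∃ p, PathFrom E p s t) ∧
  ∀ a b, E a b → ∃ p, PathFrom E p s t ∧ EdgeOn a b p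

/-- 2-terminal graph (full version): no self-loops and every vertex and edge
lies on a simple `s`-`t` path. -/
def TwoTerminalF (E : V → V → Prop) (s t : V) : Prop :=
  (∀ v, ¬ E v v) ∧ (∀ v, ∃ p, PathFrom E p s t ∧ v ∈ p) ∧
  ∀ a b, E a b → ∃ p, PathFrom E p s t ∧ EdgeOn a b p

/-- `C` is an `s`-`t` edge cut. -/
def IsCut (E : V → V → Prop) (s t : V) (C : Set (V × V)) : Prop :=
  (∀ e ∈ C, E e.1 e.2) ∧ ¬ ∃ p, PathFrom (fun a b => E a b ∧ (a, b) ∉ C) p s t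

def IsMinCut (E : V → V → Prop) (s t : V) (C : Set (V × V)) : Prop :=
  IsCut E s t C ∧ ∀ C' ⊂ C, ¬ IsCut E s t C'

/-- `S` is parallel: contained in some minimal `s`-`t` cut. -/
def Parallel (E : V → V → Prop) (s t : V) (S : Set (V × V)) : Prop :=
  ∃ C, IsMinCut E s t C ∧ S ⊆ C

/-- `S` is serial: contained in a simple directed `s`-`t` path. -/
def Serial (E : V → V → Prop) (s t : V) (S : Set (V × V)) : Prop :=
  ∃ p, PathFrom E p s t ∧ ∀ e ∈ S, EdgeOn e.1 e.2 p

/- ### Auxiliary lemmas -/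

lemma edgeOn_cons_cons {u v x y : V} {l : List V} :
    EdgeOn u v (x :: y :: l) ↔ (u = x ∧ v = y) ∨ EdgeOn u v (y :: l) := by
  simp [EdgeOn, Prod.ext_iff]

lemma edgeOn_iff {u v : V} : ∀ {p : List V},
    EdgeOn u v p ↔ ∃ l1 l2, p = l1 ++ u :: v :: l2
  | [] => by
    simp only [EdgeOn, List.tail_nil, List.zip_nil_right, List.not_mem_nil, false_iff]
    rintro ⟨l1, l2, h⟩
    simp at h
  | [x] => by
    constructor
    · intro h; simp [EdgeOn] at h
    · rintro ⟨l1, l2, h⟩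
      rcases l1 with _ | ⟨z, l1'⟩ <;> simp_all
  | x :: y :: l => by
    rw [edgeOn_cons_cons, edgeOn_iff (p := y :: l)]
    constructor
    · rintro (⟨rfl, rfl⟩ | ⟨l1, l2, h⟩)
      · exact ⟨[], l, rfl⟩
      · exact ⟨x :: l1, l2, by rw [List.cons_append, h]⟩
    · rintro ⟨l1, l2, h⟩
      rcases l1 with _ | ⟨z, l1'⟩
      · injection h with h1 h2
        injection h2 with h2 h3
        exact Or.inl ⟨h1.symm, h2.symm⟩
      · injection h with h1 h2
        exact Or.inr ⟨l1', l2, h2⟩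

lemma edgeOn_cons {u v x : V} {l : List V} (h : EdgeOn u v l) : EdgeOn u v (x :: l) := by
  obtain ⟨l1, l2, rfl⟩ := edgeOn_iff.mp h
  exact edgeOn_iff.mpr ⟨x :: l1, l2, rfl⟩

lemma edgeOn_split : ∀ (l1 : List V) {l2 : List V} {u v x y : V},
    EdgeOn u v (l1 ++ x :: y :: l2) →
    EdgeOn u v (l1 ++ [x]) ∨ (u = x ∧ v = y) ∨ EdgeOn u v (y :: l2)
  | [], l2, u, v, x, y, h => Or.inr (edgeOn_cons_cons.mp h)
  | [z], l2, u, v, x, y, h => by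
    rcases edgeOn_cons_cons.mp h with ⟨rfl, rfl⟩ | h'
    · exact Or.inl (edgeOn_cons_cons.mpr (Or.inl ⟨rfl, rfl⟩))
    · rcases edgeOn_split [] h' with h'' | h''
      · exact Or.inl (edgeOn_cons h'')
      · exact Or.inr h''
  | z :: w :: l1', l2, u, v, x, y, h => by
    rcases edgeOn_cons_cons.mp h with ⟨rfl, rfl⟩ | h'
    · exact Or.inl (edgeOn_cons_cons.mpr (Or.inl ⟨rfl, rfl⟩))
    · rcases edgeOn_split (w :: l1') h' with h'' | h''
      · exact Or.inl (edgeOn_cons h'')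
      · exact Or.inr h''

lemma chain_reach {E : V → V → Prop} : ∀ {l : List V} {x y : V},
    List.Chain E x l → y ∈ l → ∃ z, E x z ∧ Reach E z y
  | [], _, _, _, hy => absurd hy List.not_mem_nil
  | w :: l', x, y, hc, hy => by
    rcases List.chain_cons.mp hc with ⟨hxw, hc'⟩
    rcases List.mem_cons.mp hy with rfl | hy'
    · exact ⟨y, hxw, Relation.ReflTransGen.refl⟩
    · obtain ⟨z, hwz, hzy⟩ := chain_reach hc' hy'
      exact ⟨w, hxw, Relation.ReflTransGen.head hwz hzy⟩

lemma nodup_of_chain' {E : V → V → Prop} (hacyc : Acyclic E) : ∀ {l : List V},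
    l.Chain' E → l.Nodup
  | [], _ => List.nodup_nil
  | x :: l, h => by
    have hc : List.Chain E x l := h
    refine List.nodup_cons.mpr ⟨?_, nodup_of_chain' hacyc h.tail⟩
    intro hx
    obtain ⟨z, hxz, hzx⟩ := chain_reach hc hx
    exact hacyc x z hxz hzx

lemma chain'_restrict {E P : V → V → Prop} : ∀ {l : List V}, l.Chain' E →
    (∀ x y, EdgeOn x y l → P x y) → l.Chain' (fun x y => E x y ∧ P x y)
  | [], _, _ => List.isChain_nil
  | [x], _, _ => List.isChain_singleton x
  | x :: y :: l, h, hP => by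
    rcases List.isChain_cons_cons.mp h with ⟨hxy, h'⟩
    refine List.isChain_cons_cons.mpr ⟨⟨hxy, hP x y (edgeOn_cons_cons.mpr (Or.inl ⟨rfl, rfl⟩))⟩, ?_⟩
    exact chain'_restrict h' fun a b hab => hP a b (edgeOn_cons hab)

lemma not_edgeOn_last {l : List V} {a b : V} (h : (l ++ [a]).Nodup) :
    ¬ EdgeOn a b (l ++ [a]) := by
  intro he
  obtain ⟨m1, m2, hm⟩ := edgeOn_iff.mp he
  have ha : a ∈ l := by
    have : (l ++ [a]).dropLast = (m1 ++ a :: b :: m2).dropLast := by rw [hm]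
    simp only [List.dropLast_concat] at this
    rw [this]
    have h2 : (m1 ++ a :: b :: m2).dropLast = m1 ++ (a :: b :: m2).dropLast := by simp
    rw [h2]
    simp
  exact (List.disjoint_of_nodup_append h) ha (List.mem_singleton_self a)

lemma not_edgeOn_head {l : List V} {a b : V} (h : (b :: l).Nodup) (hne : a ≠ b) :
    ¬ EdgeOn a b (b :: l) := by
  intro he
  obtain ⟨m1, m2, hm⟩ := edgeOn_iff.mp he
  rcases m1 with _ | ⟨z, m1'⟩
  · injection hm with h1 h2
    exact hne h1.symm
  · injection hm with h1 h2
    have hb : b ∈ l := by rw [h2]; simp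
    exact (List.nodup_cons.mp h).1 hb

lemma head?_append_cons (l : List V) (x : V) (xs ys : List V) :
    (l ++ x :: xs).head? = (l ++ x :: ys).head? := by
  cases l <;> simp

/-- Deleting from a TDAG an edge `(a,b)` with outdeg(a) ≥ 2 and indeg(b) ≥ 2 yields a
graph in which every remaining edge lies on a simple `s`-`t` path. -/
theorem stmt3 {V : Type*} (E : V → V → Prop) (s t a b : V)
    (hG : TwoTerminalF E s t) (hacyc : Acyclic E) (hab : E a b)
    (hout : ∃ c, c ≠ b ∧ E a c) (hin : ∃ c, c ≠ a ∧ E c b) :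
    ∀ u v, (E u v ∧ ¬(u = a ∧ v = b)) →
      ∃ p, PathFrom (fun x y => E x y ∧ ¬(x = a ∧ y = b)) p s t ∧ EdgeOn u v p := by
  obtain ⟨hloop, -, hedge⟩ := hG
  obtain ⟨c, hcb, hac⟩ := hout
  obtain ⟨d, hda, hdb⟩ := hin
  have hab_ne : a ≠ b := fun h => hloop a (h ▸ hab)
  rintro u v ⟨huv, hne⟩
  obtain ⟨p, ⟨⟨hchain, hnodup⟩, hhead, hlast⟩, hon⟩ := hedge u v huv
  by_cases hPab : EdgeOn a b p
  · obtain ⟨l1, l2, rfl⟩ := edgeOn_iff.mp hPab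
    rcases edgeOn_split l1 hon with h1 | h2 | h3
    · -- the edge (u,v) lies on the prefix `l1 ++ [a]`; reroute through (a,c)
      obtain ⟨q, ⟨⟨hqchain, hqnodup⟩, hqhead, hqlast⟩, hqon⟩ := hedge a c hac
      obtain ⟨q1, q2, rfl⟩ := edgeOn_iff.mp hqon
      have hnpchain : (l1 ++ a :: c :: q2).Chain' E := by
        refine List.isChain_append_cons_cons.mpr ?_
        exact ⟨(List.isChain_append_cons_cons.mp hchain).1, hac,
          (List.isChain_append_cons_cons.mp hqchain).2.2⟩
      have hnpnd : (l1 ++ a :: c :: q2).Nodup := nodup_of_chain' hacyc hnpchain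
      have hpresub : List.Sublist (l1 ++ [a]) (l1 ++ a :: c :: q2) :=
        ((List.nil_sublist (c :: q2)).cons_cons a).append_left l1
      have hsufnd : (a :: c :: q2).Nodup :=
        hnpnd.sublist (List.sublist_append_right l1 _)
      have hnab : ¬ EdgeOn a b (l1 ++ a :: c :: q2) := by
        intro hE
        rcases edgeOn_split l1 hE with hA | hB | hC
        · exact not_edgeOn_last (hnpnd.sublist hpresub) hA
        · exact hcb hB.2.symm
        · obtain ⟨m1, m2, hm⟩ := edgeOn_iff.mp hC
          have haq : a ∈ c :: q2 := by rw [hm]; simp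
          exact (List.nodup_cons.mp hsufnd).1 haq
      refine ⟨l1 ++ a :: c :: q2, ⟨⟨?_, hnpnd⟩, ?_, ?_⟩, ?_⟩
      · exact chain'_restrict hnpchain fun x y hxy hxy' =>
          hnab (by obtain ⟨rfl, rfl⟩ := hxy'; exact hxy)
      · rw [head?_append_cons l1 a (c :: q2) (b :: l2)]; exact hhead
      · rw [List.getLast?_append_cons l1 a (c :: q2),
          ← List.getLast?_append_cons q1 a (c :: q2)]
        exact hqlast
      · obtain ⟨m1, m2, hm⟩ := edgeOn_iff.mp h1
        refine edgeOn_iff.mpr ⟨m1, m2 ++ c :: q2, ?_⟩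
        have : l1 ++ a :: c :: q2 = (l1 ++ [a]) ++ c :: q2 := by simp
        rw [this, hm]; simp
    · exact absurd h2 hne
    · -- the edge (u,v) lies on the suffix `b :: l2`; reroute through (d,b)
      obtain ⟨r, ⟨⟨hrchain, hrnodup⟩, hrhead, hrlast⟩, hron⟩ := hedge d b hdb
      obtain ⟨r1, r2, rfl⟩ := edgeOn_iff.mp hron
      have hnpchain : (r1 ++ d :: b :: l2).Chain' E := by
        refine List.isChain_append_cons_cons.mpr ?_
        exact ⟨(List.isChain_append_cons_cons.mp hrchain).1, hdb,
          (List.isChain_append_cons_cons.mp hchain).2.2⟩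
      have hnpnd : (r1 ++ d :: b :: l2).Nodup := nodup_of_chain' hacyc hnpchain
      have hform : r1 ++ d :: b :: l2 = (r1 ++ [d]) ++ b :: l2 := by simp
      have hsufnd : (b :: l2).Nodup :=
        hnpnd.sublist ((List.sublist_cons_self d (b :: l2)).trans
          (List.sublist_append_right r1 _))
      have hnab : ¬ EdgeOn a b (r1 ++ d :: b :: l2) := by
        intro hE
        rcases edgeOn_split r1 hE with hA | hB | hC
        · obtain ⟨m1, m2, hm⟩ := edgeOn_iff.mp hA
          have hb1 : b ∈ r1 ++ [d] := by rw [hm]; simp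
          have hdisj : List.Disjoint (r1 ++ [d]) (b :: l2) :=
            List.disjoint_of_nodup_append (hform ▸ hnpnd)
          exact hdisj hb1 List.mem_cons_self
        · exact hda hB.1.symm
        · exact not_edgeOn_head hsufnd hab_ne hC
      refine ⟨r1 ++ d :: b :: l2, ⟨⟨?_, hnpnd⟩, ?_, ?_⟩, ?_⟩
      · exact chain'_restrict hnpchain fun x y hxy hxy' =>
          hnab (by obtain ⟨rfl, rfl⟩ := hxy'; exact hxy)
      · rw [head?_append_cons r1 d (b :: l2) (b :: r2)]; exact hrhead
      · rw [List.getLast?_append_cons r1 d (b :: l2)]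
        rw [List.getLast?_append_cons l1 a (b :: l2)] at hlast
        rw [List.getLast?_cons_cons] at hlast ⊢
        exact hlast
      · obtain ⟨m1, m2, hm⟩ := edgeOn_iff.mp h3
        refine edgeOn_iff.mpr ⟨(r1 ++ [d]) ++ m1, m2, ?_⟩
        rw [hform, hm]; simp
  · exact ⟨p, ⟨⟨chain'_restrict hchain fun x y hxy hxy' =>
      hPab (by obtain ⟨rfl, rfl⟩ := hxy'; exact hxy), hnodup⟩, hhead, hlast⟩, hon⟩
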